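/- Suppose c, p : Fin 3 × Fin 3 → ZMod n with pairwise distinct indices i, j, k satisfy the full alignment scheme: c i i + p j i = c i j + p k j = c i k + p j k; c i i + p k i = c i j + p j j = c i k + p k k; c j i + p k i = c j j + p k j = c j k + p i k; c j i + p i i = c j k + p k k; c j j + p i j = c j k + p j k; c k i + p i i = c k j + p j j = c k k + p i k; c k j + p i j = c k i + p j i; c k i + p k i = c k k + p j k. Then c i i + c j k + c k j = c j j + c i k + c k i = c k k + c i j + c j i in ZMod n (constraint (ii)). -/
import Mathlib


theorem constraint_ii_of_alignment (n : ℕ) (c p : Fin 3 × Fin 3 → ZMod n)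
    (i j k : Fin 3) (hij : i ≠ j) (hjk : j ≠ k) (hik : i ≠ k)
    (h15a : c (i, i) + p (j, i) = c (i, j) + p (k, j))
    (h15b : c (i, j) + p (k, j) = c (i, k) + p (j, k))
    (h16a : c (i, i) + p (k, i) = c (i, j) + p (j, j))
    (h16b : c (i, j) + p (j, j) = c (i, k) + p (k, k))
    (h17a : c (j, i) + p (k, i) = c (j, j) + p (k, j))
    (h17b : c (j, j) + p (k, j) = c (j, k) + p (i, k))
    (h18 : c (j, i) + p (i, i) = c (j, k) + p (k, k))
    (h19 : c (j, j) + p (i, j) = c (j, k) + p (j, k))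
    (h20a : c (k, i) + p (i, i) = c (k, j) + p (j, j))
    (h20b : c (k, j) + p (j, j) = c (k, k) + p (i, k))
    (h21 : c (k, j) + p (i, j) = c (k, i) + p (j, i))
    (h22 : c (k, i) + p (k, i) = c (k, k) + p (j, k)) :
    c (i, i) + c (j, k) + c (k, j) = c (j, j) + c (i, k) + c (k, i) ∧
    c (j, j) + c (i, k) + c (k, i) = c (k, k) + c (i, j) + c (j, i) := by
  constructor
  · linear_combination h15a + h15b - h19 + h21
  · linear_combination -h15a - h15b + h16a - h17a - h17b + h19 + h20b - h21
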